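/- Gaussian stability under normal distortion (CDF case): Let μ ∈ ℝ, σ > 0, p₀ ∈ (0,1), γ ∈ (0,1]. Let F(x) = Φ((x−μ)/σ) be the CDF of a Gaussian with mean μ and standard deviation σ. Then for all x ∈ ℝ, w_{p₀,γ}(F(x)) = Φ((x − μ̂)/σ̂), where μ̂ = μ − σ(γ⁻¹ − 1)Φ⁻¹(p₀) and σ̂ = σ/γ. That is, the distorted CDF is the CDF of a Gaussian with mean μ̂ and standard deviation σ̂. -/
import Mathlib

open Real MeasureTheory ProbabilityTheory Set Filter

/-- Standard normal CDF. -/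
noncomputable def Phi (x : ℝ) : ℝ :=
  ∫ t in Set.Iic x, Real.exp (-t ^ 2 / 2) / Real.sqrt (2 * Real.pi)

/-- Standard normal quantile function (inverse of `Phi`). -/
noncomputable def PhiInv : ℝ → ℝ := Function.invFun Phi

/-- Standard normal density. -/
noncomputable def ndens (x : ℝ) : ℝ :=
  Real.exp (-x ^ 2 / 2) / Real.sqrt (2 * Real.pi)

/-- Normal distortion function. -/
noncomputable def wdist (p₀ γ p : ℝ) : ℝ :=
  Phi (γ * PhiInv p + (1 - γ) * PhiInv p₀)

lemma integrable_ndens : Integrable (fun t : ℝ => Real.exp (-t ^ 2 / 2) / Real.sqrt (2 * Real.pi)) := by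
  have h : Integrable (fun t : ℝ => Real.exp (-(1/2) * t ^ 2)) := integrable_exp_neg_mul_sq (by norm_num)
  have := h.div_const (Real.sqrt (2 * Real.pi))
  convert this using 2 with t
  ring_nf

lemma Phi_strictMono : StrictMono Phi := by
  intro a b hab
  have hint := integrable_ndens
  have h1 : Phi b - Phi a = ∫ t in a..b, Real.exp (-t ^ 2 / 2) / Real.sqrt (2 * Real.pi) := by
    rw [Phi, Phi, intervalIntegral.integral_Iic_sub_Iic (hint.integrableOn) (hint.integrableOn)]
  have h2 : (0:ℝ) < ∫ t in a..b, Real.exp (-t ^ 2 / 2) / Real.sqrt (2 * Real.pi) := by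
    apply intervalIntegral.intervalIntegral_pos_of_pos_on hint.intervalIntegrable
    · intro x _
      positivity
    · exact hab
  linarith

lemma PhiInv_Phi (y : ℝ) : PhiInv (Phi y) = y :=
  Function.leftInverse_invFun Phi_strictMono.injective y

theorem stmt7 (μ σ p₀ γ : ℝ) (hσ : 0 < σ)
    (hp₀ : p₀ ∈ Set.Ioo (0:ℝ) 1) (hγ : γ ∈ Set.Ioc (0:ℝ) 1) :
    ∀ x : ℝ,
      wdist p₀ γ (Phi ((x - μ) / σ)) =
        Phi ((x - (μ - σ * (γ⁻¹ - 1) * PhiInv p₀)) / (σ / γ)) := by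
  intro x
  rw [wdist, PhiInv_Phi]
  congr 1
  have hγ0 : γ ≠ 0 := ne_of_gt hγ.1
  field_simp
  ring
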